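/- Let T₁,...,T₇ be commuting contractions on a Hilbert space H with fundamental operators F_i of (T₁,...,T₇) and F̃_i of (T₁*,...,T₇*), i.e., T_i - T_{7-i}* T₇ = D_{T₇} F_i D_{T₇} and T_i* - T_{7-i} T₇* = D_{T₇*} F̃_i D_{T₇*} for 1 ≤ i ≤ 6. Then for each i, ⟨(T₇ F_i - F̃_i* T₇) D_{T₇} h₁, D_{T₇*} h₂⟩ = 0 for all h₁, h₂ ∈ H; consequently T₇ F_i D_{T₇} = F̃_i* T₇ D_{T₇} (as operators on H), where F_i, F̃_i are viewed as operators on H vanishing on the orthogonal complements of the corresponding defect spaces. -/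

import Mathlib

set_option linter.unusedSectionVars false
set_option maxHeartbeats 800000
set_option synthInstance.maxHeartbeats 200000

open ContinuousLinearMap
open scoped InnerProductSpace

lemma my_cfc_mem_elemental {A : Type*} [CStarAlgebra A] (a : A) [IsStarNormal a] (f : ℂ → ℂ) :
    cfc f a ∈ StarAlgebra.elemental ℂ a := by
  by_cases h : ContinuousOn f (spectrum ℂ a)
  · rw [cfc_apply f a ‹_› h, cfcHom_eq_of_isStarNormal]
    exact Subtype.coe_prop _
  · rw [cfc_apply_of_not_continuousOn a h]
    exact zero_mem _

lemma my_commute_of_mem_elemental {A : Type*} [CStarAlgebra A] {a b y : A}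
    (h : Commute b a) (h' : Commute b (star a))
    (hy : y ∈ StarAlgebra.elemental ℂ a) : Commute b y := by
  induction hy using StarAlgebra.elemental.induction_on with
  | self => exact h
  | star_self => exact h'
  | algebraMap r => exact Algebra.commute_algebraMap_right r b
  | add u hu v hv hu' hv' => exact hu'.add_right hv'
  | mul u hu v hv hu' hv' => exact hu'.mul_right hv'
  | closure s hs hs' v hv =>
      have hcl : IsClosed {x : A | Commute b x} := by
        simpa [Commute, SemiconjBy] using
          isClosed_eq (continuous_const.mul continuous_id) (continuous_id.mul continuous_const)
      exact hcl.closure_subset_iff.mpr (fun u hu => hs' u hu) hv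

lemma my_commute_sqrt {A : Type*} [CStarAlgebra A] [PartialOrder A] [StarOrderedRing A]
    {a b : A} (ha : 0 ≤ a) (h : Commute b a) : Commute b (CFC.sqrt a) := by
  have hsa : IsSelfAdjoint a := .of_nonneg ha
  have key : CFC.sqrt a =
      cfc (fun x : ℂ => ((NNReal.sqrt x.re.toNNReal : ℝ) : ℂ)) a := by
    rw [CFC.sqrt_eq_cfc, cfc_nnreal_eq_real (ha := ha), cfc_real_eq_complex]
  rw [key]
  have : IsStarNormal a := hsa.isStarNormal
  exact my_commute_of_mem_elemental h (hsa.star_eq.symm ▸ h) (my_cfc_mem_elemental a _)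

section Intertwine

variable {K : Type*} [NormedAddCommGroup K] [InnerProductSpace ℂ K] [CompleteSpace K]

noncomputable def inj1 : K →L[ℂ] WithLp 2 (K × K) :=
  (WithLp.prodContinuousLinearEquiv 2 ℂ K K).symm.toContinuousLinearMap ∘L
    ContinuousLinearMap.inl ℂ K K

noncomputable def inj2 : K →L[ℂ] WithLp 2 (K × K) :=
  (WithLp.prodContinuousLinearEquiv 2 ℂ K K).symm.toContinuousLinearMap ∘L
    ContinuousLinearMap.inr ℂ K K

noncomputable def proj1 : WithLp 2 (K × K) →L[ℂ] K :=
  ContinuousLinearMap.fst ℂ K K ∘L (WithLp.prodContinuousLinearEquiv 2 ℂ K K).toContinuousLinearMap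

noncomputable def proj2 : WithLp 2 (K × K) →L[ℂ] K :=
  ContinuousLinearMap.snd ℂ K K ∘L (WithLp.prodContinuousLinearEquiv 2 ℂ K K).toContinuousLinearMap

@[simp] lemma proj1_inj1 (x : K) : proj1 (inj1 x) = x := by simp [proj1, inj1]
@[simp] lemma proj2_inj2 (x : K) : proj2 (inj2 x) = x := by simp [proj2, inj2]
@[simp] lemma proj1_inj2 (x : K) : proj1 (inj2 x) = 0 := by simp [proj1, inj2]
@[simp] lemma proj2_inj1 (x : K) : proj2 (inj1 x) = 0 := by simp [proj2, inj1]

lemma inj_proj_eq (z : WithLp 2 (K × K)) : inj1 (proj1 z) + inj2 (proj2 z) = z := by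
  apply (WithLp.prodContinuousLinearEquiv 2 ℂ K K).injective
  simp [proj1, proj2, inj1, inj2]
  rfl

lemma inner_inj1 (x : K) (z : WithLp 2 (K × K)) : ⟪inj1 x, z⟫_ℂ = ⟪x, proj1 z⟫_ℂ := by
  simp [inj1, proj1, WithLp.prod_inner_apply]

lemma inner_inj2 (x : K) (z : WithLp 2 (K × K)) : ⟪inj2 x, z⟫_ℂ = ⟪x, proj2 z⟫_ℂ := by
  simp [inj2, proj2, WithLp.prod_inner_apply]

lemma adjoint_inj1 : adjoint (inj1 : K →L[ℂ] WithLp 2 (K × K)) = proj1 := by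
  symm
  rw [ContinuousLinearMap.eq_adjoint_iff]
  intro x y
  rw [← inner_conj_symm, ← inner_inj1, inner_conj_symm]

lemma adjoint_inj2 : adjoint (inj2 : K →L[ℂ] WithLp 2 (K × K)) = proj2 := by
  symm
  rw [ContinuousLinearMap.eq_adjoint_iff]
  intro x y
  rw [← inner_conj_symm, ← inner_inj2, inner_conj_symm]

lemma my_intertwine {P Q S : K →L[ℂ] K} (hP : P.IsPositive) (hQ : Q.IsPositive)
    (h : S ∘L (P ∘L P) = (Q ∘L Q) ∘L S) : S ∘L P = Q ∘L S := by
  set D : WithLp 2 (K × K) →L[ℂ] WithLp 2 (K × K) :=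
    inj1 ∘L P ∘L proj1 + inj2 ∘L Q ∘L proj2 with hDdef
  have hD1 : ∀ x, D (inj1 x) = inj1 (P x) := by intro x; simp [hDdef]
  have hD2 : ∀ x, D (inj2 x) = inj2 (Q x) := by intro x; simp [hDdef]
  have hDz : ∀ z, D z = inj1 (P (proj1 z)) + inj2 (Q (proj2 z)) := by
    intro z; simp [hDdef]
  -- D is positive
  have hDsa : IsSelfAdjoint D := by
    rw [IsSelfAdjoint, star_eq_adjoint, hDdef]
    rw [map_add]
    simp only [← ContinuousLinearMap.comp_assoc]
    rw [adjoint_comp, adjoint_comp, adjoint_comp, adjoint_comp,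
      adjoint_inj1, adjoint_inj2, hP.isSelfAdjoint.adjoint_eq, hQ.isSelfAdjoint.adjoint_eq,
      ← adjoint_inj1, ← adjoint_inj2, adjoint_adjoint, adjoint_adjoint]
    simp only [ContinuousLinearMap.comp_assoc]
  have hDpos : D.IsPositive := by
    refine ⟨hDsa.isSymmetric, fun z => ?_⟩
    have : ⟪D z, z⟫_ℂ = ⟪P (proj1 z), proj1 z⟫_ℂ + ⟪Q (proj2 z), proj2 z⟫_ℂ := by
      rw [hDz, inner_add_left, inner_inj1, inner_inj2]
    rw [ContinuousLinearMap.reApplyInnerSelf, this, map_add]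
    exact add_nonneg (hP.re_inner_nonneg_left _) (hQ.re_inner_nonneg_left _)
  set S' : WithLp 2 (K × K) →L[ℂ] WithLp 2 (K × K) := inj2 ∘L S ∘L proj1 with hS'def
  have hS'z : ∀ z, S' z = inj2 (S (proj1 z)) := fun z => rfl
  have hcomm2 : Commute S' (D * D) := by
    have hpt : ∀ u : K, S (P (P u)) = Q (Q (S u)) := by
      intro u
      have := congrFun (congrArg (fun (f : K →L[ℂ] K) => (f : K → K)) h) u
      simpa using this
    ext z
    show S' (D (D z)) = D (D (S' z))
    rw [hDz z, map_add, hD1, hD2, hS'z, map_add]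
    simp only [proj1_inj1, proj1_inj2, map_zero, add_zero, hS'z, hD2, hpt]
  have hsqrtD : CFC.sqrt (D * D) = D :=
    CFC.sqrt_mul_self D ((ContinuousLinearMap.nonneg_iff_isPositive D).mpr hDpos)
  have hcomm1 : Commute S' D := by
    rw [← hsqrtD]
    exact my_commute_sqrt (by simpa [hDsa.star_eq] using star_mul_self_nonneg D) hcomm2
  have key : ∀ u : K, S (P u) = Q (S u) := by
    intro u
    have h0 : S' (D (inj1 u)) = D (S' (inj1 u)) := by
      calc S' (D (inj1 u)) = (S' * D) (inj1 u) := rfl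
        _ = (D * S') (inj1 u) := by rw [hcomm1.eq]
        _ = D (S' (inj1 u)) := rfl
    rw [hD1, hS'z, hS'z, proj1_inj1, hD2] at h0
    have h1 := congrArg proj2 h0
    simpa using h1
  ext u
  simpa using key u

end Intertwine

/-- Let `T₁,...,T₇` be commuting contractions with fundamental operators `F i` of
`(T₁,...,T₇)` and `F̃ i` of `(T₁*,...,T₇*)` (supported on the respective defect spaces).
Then `⟪(T₇ F_i - F̃_i* T₇) D_{T₇} h₁, D_{T₇*} h₂⟫ = 0` for all `h₁, h₂`, and consequently
`T₇ F_i D_{T₇} = F̃_i* T₇ D_{T₇}`. -/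
theorem gamma_contraction_intertwine
    {H : Type*} [NormedAddCommGroup H] [InnerProductSpace ℂ H] [CompleteSpace H]
    (T : ℕ → (H →L[ℂ] H))
    (hcomm : ∀ i j, 1 ≤ i → i ≤ 7 → 1 ≤ j → j ≤ 7 → Commute (T i) (T j))
    (hcontr : ∀ i, 1 ≤ i → i ≤ 7 → ‖T i‖ ≤ 1)
    (DT DTs : H →L[ℂ] H)
    (hDT : DT.IsPositive) (hDT2 : DT ∘L DT = 1 - adjoint (T 7) ∘L T 7)
    (hDTs : DTs.IsPositive) (hDTs2 : DTs ∘L DTs = 1 - T 7 ∘L adjoint (T 7))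
    (F Ft : ℕ → (H →L[ℂ] H))
    (hF : ∀ i, 1 ≤ i → i ≤ 6 →
      T i - adjoint (T (7 - i)) ∘L T 7 = DT ∘L F i ∘L DT)
    (hFt : ∀ i, 1 ≤ i → i ≤ 6 →
      adjoint (T i) - T (7 - i) ∘L adjoint (T 7) = DTs ∘L Ft i ∘L DTs)
    (hFran : ∀ i, 1 ≤ i → i ≤ 6 → ∀ x : H, F i x ∈ closure (Set.range ⇑DT))
    (hFsupp : ∀ i, 1 ≤ i → i ≤ 6 → ∀ x : H, (∀ y : H, ⟪DT y, x⟫_ℂ = 0) → F i x = 0)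
    (hFtran : ∀ i, 1 ≤ i → i ≤ 6 → ∀ x : H, Ft i x ∈ closure (Set.range ⇑DTs))
    (hFtsupp : ∀ i, 1 ≤ i → i ≤ 6 → ∀ x : H, (∀ y : H, ⟪DTs y, x⟫_ℂ = 0) → Ft i x = 0) :
    ∀ i, 1 ≤ i → i ≤ 6 →
      (∀ h₁ h₂ : H,
        ⟪(T 7 ∘L F i - adjoint (Ft i) ∘L T 7) (DT h₁), DTs h₂⟫_ℂ = 0) ∧
      T 7 ∘L F i ∘L DT = adjoint (Ft i) ∘L T 7 ∘L DT := by
  intro i hi1 hi6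
  -- the defect intertwining relation `T₇ D_{T₇} = D_{T₇*} T₇`
  have hT : T 7 ∘L DT = DTs ∘L T 7 := by
    apply my_intertwine hDT hDTs
    rw [hDT2, hDTs2]
    ext x
    simp
  have hTpt : ∀ u : H, T 7 (DT u) = DTs (T 7 u) := fun u => DFunLike.congr_fun hT u
  -- pointwise fundamental equations
  have h1pt : ∀ u : H, DT (F i (DT u)) = T i u - adjoint (T (7 - i)) (T 7 u) := by
    intro u
    have := DFunLike.congr_fun (hF i hi1 hi6) u
    simpa using this.symm
  have h2 : T i - T 7 ∘L adjoint (T (7 - i)) = DTs ∘L adjoint (Ft i) ∘L DTs := by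
    have h := congrArg (ContinuousLinearMap.adjoint) (hFt i hi1 hi6)
    rw [map_sub] at h
    rw [adjoint_adjoint, adjoint_comp, adjoint_adjoint, adjoint_comp, adjoint_comp,
      hDTs.isSelfAdjoint.adjoint_eq] at h
    rw [h]
    simp [ContinuousLinearMap.comp_assoc]
  have h2pt : ∀ u : H, DTs (adjoint (Ft i) (DTs u)) = T i u - T 7 (adjoint (T (7 - i)) u) := by
    intro u
    have := DFunLike.congr_fun h2 u
    simpa using this.symm
  have hcpt : ∀ u : H, T 7 (T i u) = T i (T 7 u) := by
    intro u
    have := DFunLike.congr_fun ((hcomm i 7 hi1 (by omega) (by norm_num) (by norm_num)).eq.symm) u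
    simpa using this
  -- the key vanishing relation
  have hkey : ∀ x : H, DTs ((T 7 ∘L F i ∘L DT) x - (adjoint (Ft i) ∘L T 7 ∘L DT) x) = 0 := by
    intro x
    have e1 : DTs ((T 7 ∘L F i ∘L DT) x) = T 7 (T i x) - T 7 (adjoint (T (7 - i)) (T 7 x)) := by
      simp only [ContinuousLinearMap.comp_apply]
      rw [← hTpt, h1pt, map_sub]
    have e2 : DTs ((adjoint (Ft i) ∘L T 7 ∘L DT) x)
        = T i (T 7 x) - T 7 (adjoint (T (7 - i)) (T 7 x)) := by
      simp only [ContinuousLinearMap.comp_apply]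
      rw [hTpt, h2pt]
    rw [map_sub, e1, e2, hcpt, sub_self]
  -- membership in the closure of the range of `DTs`
  set K : Submodule ℂ H := LinearMap.range (DTs : H →ₗ[ℂ] H) with hK
  have hKcoe : (K : Set H) = Set.range ⇑DTs := by
    ext y
    simp [hK, LinearMap.mem_range, Set.mem_range]
  have hKbidual : ∀ v : H, v ∈ closure (Set.range ⇑DTs) → v ∈ Kᗮᗮ := by
    intro v hv
    rw [Submodule.orthogonal_orthogonal_eq_closure]
    have hv' : v ∈ (K.topologicalClosure : Set H) := by
      rw [Submodule.topologicalClosure_coe, hKcoe]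
      exact hv
    exact hv'
  have hmem : ∀ x : H, (T 7 ∘L F i ∘L DT) x - (adjoint (Ft i) ∘L T 7 ∘L DT) x ∈ Kᗮᗮ := by
    intro x
    refine sub_mem ?_ ?_
    · -- `T₇ (F i (DT x)) ∈ closure (range DTs)`
      apply hKbidual
      have hmaps : Set.MapsTo (⇑(T 7)) (Set.range ⇑DT) (Set.range ⇑DTs) := by
        rintro _ ⟨u, rfl⟩
        exact ⟨T 7 u, (hTpt u).symm⟩
      have := (hmaps.closure (T 7).continuous) (hFran i hi1 hi6 (DT x))
      simpa using this
    · -- `(Ft i)* y ∈ closure (range DTs)` for every `y`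
      simp only [ContinuousLinearMap.comp_apply]
      rw [Submodule.mem_orthogonal]
      intro u hu
      have hu' : ∀ y : H, ⟪DTs y, u⟫_ℂ = 0 := by
        intro y
        exact (Submodule.mem_orthogonal _ _).mp hu (DTs y) ⟨y, rfl⟩
      rw [← inner_conj_symm, ContinuousLinearMap.adjoint_inner_left,
        hFtsupp i hi1 hi6 u hu', inner_zero_right, map_zero]
  have hvanish : ∀ x : H, (T 7 ∘L F i ∘L DT) x - (adjoint (Ft i) ∘L T 7 ∘L DT) x = 0 := by
    intro x
    set v := (T 7 ∘L F i ∘L DT) x - (adjoint (Ft i) ∘L T 7 ∘L DT) x with hv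
    have hvK : v ∈ Kᗮ := by
      rw [Submodule.mem_orthogonal]
      rintro _ ⟨y, rfl⟩
      have hswap : ⟪DTs y, v⟫_ℂ = ⟪y, DTs v⟫_ℂ := by
        conv_lhs => rw [← hDTs.isSelfAdjoint.adjoint_eq]
        exact ContinuousLinearMap.adjoint_inner_left _ _ _
      rw [ContinuousLinearMap.coe_coe, hswap, hv, hkey x, inner_zero_right]
    have := (Submodule.mem_orthogonal _ _).mp (hmem x) v hvK
    exact inner_self_eq_zero.mp this
  have hop : T 7 ∘L F i ∘L DT = adjoint (Ft i) ∘L T 7 ∘L DT := by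
    ext x
    have := hvanish x
    rwa [sub_eq_zero] at this
  refine ⟨fun h₁ h₂ => ?_, hop⟩
  have : (T 7 ∘L F i - adjoint (Ft i) ∘L T 7) (DT h₁)
      = (T 7 ∘L F i ∘L DT) h₁ - (adjoint (Ft i) ∘L T 7 ∘L DT) h₁ := by
    simp
  rw [this, hvanish h₁, inner_zero_left]
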